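/- For $\rho \in (-1, 1)$ and a positive integer $m$, the $m \times m$ circulant matrix $M$ with first row $\frac{1}{1-\rho^4}(1 + \rho^4, -\rho^2, 0, \ldots, 0, -\rho^2)$ (i.e., $M = I_m - R$ where $R$ is the circulant matrix $\frac{\rho^2}{1-\rho^4}(-2\rho^2, 1, 0, \ldots, 0, 1)$) has determinant $\det(M) = (1-\rho^4)^{-m}(1 - \rho^{2m})^2$. -/

import Mathlib

open Matrix

open Fin.NatCast in
lemma shift_det (n : ℕ) (t : ℝ) :
    Matrix.det (Matrix.of fun j k : Fin (n+2) =>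
      (if k = j then (1:ℝ) else 0) - t * (if k = j + 1 then 1 else 0))
      = 1 - t ^ (n+2) := by
  set m := n + 2 with hmdef
  set M := (Matrix.of fun j k : Fin m =>
      (if k = j then (1:ℝ) else 0) - t * (if k = j + 1 then 1 else 0)) with hM
  set c : Equiv.Perm (Fin m) := Equiv.subRight 1 with hc
  have hone : (1 : Fin m) ≠ 0 := by
    simp [Fin.ext_iff, hmdef]
  haveI : NeZero m := ⟨by simp [hmdef]⟩
  have hcapp : ∀ x : Fin m, c x = x - 1 := fun x => rfl
  have class1 : ∀ σ : Equiv.Perm (Fin m), (∀ i, σ i = i ∨ σ i = i - 1) →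
      σ = 1 ∨ σ = c := by
    intro σ h
    by_cases hid : ∀ i, σ i = i
    · left; ext i; simp [hid i]
    · right
      push_neg at hid
      obtain ⟨i, hi⟩ := hid
      have hi' : σ i = i - 1 := (h i).resolve_left hi
      have key : ∀ k : ℕ, σ (i - (k : Fin m)) = i - (k : Fin m) - 1 := by
        intro k
        induction k with
        | zero => simpa using hi'
        | succ k ih =>
          have hcast : ((k+1 : ℕ) : Fin m) = (k : Fin m) + 1 := by
            push_cast; ring
          rw [hcast, ← sub_sub]
          rcases h (i - (k : Fin m) - 1) with h1 | h1
          · exfalso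
            have heq : σ (i - (k : Fin m) - 1) = σ (i - (k : Fin m)) := by
              rw [h1, ih]
            have := σ.injective heq
            exact hone (sub_eq_self.mp this)
          · exact h1
      ext j
      have hj : i - ((i - j : Fin m) : ℕ) = j := by
        rw [Fin.cast_val_eq_self, sub_sub_cancel]
      have := key ((i - j : Fin m) : ℕ)
      rw [hj] at this
      rw [this, hcapp]
  rw [Matrix.det_apply]
  have hsub : ({1, c} : Finset (Equiv.Perm (Fin m))) ⊆ Finset.univ :=
    Finset.subset_univ _
  rw [← Finset.sum_subset hsub]
  · have h1c : (1 : Equiv.Perm (Fin m)) ≠ c := by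
      intro h
      have h0 : (0:Fin m) = (0:Fin m) - 1 := by
        conv_lhs => rw [show (0:Fin m) = (1 : Equiv.Perm (Fin m)) 0 from rfl, h, hcapp]
      rw [eq_sub_iff_add_eq, zero_add] at h0
      exact hone h0
    rw [Finset.sum_pair h1c]
    have hprod1 : (∏ i : Fin m, M ((1 : Equiv.Perm (Fin m)) i) i) = 1 := by
      apply Finset.prod_eq_one
      intro i _
      simp [hM, left_eq_add, hone]
    have hprodc : (∏ i : Fin m, M (c i) i) = (-t) ^ m := by
      have hconst : ∀ i ∈ Finset.univ, M (c i) i = -t := by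
        intro i _
        have h1 : ¬ (i = i - 1) := by
          intro h
          rw [eq_sub_iff_add_eq] at h
          exact hone (add_eq_left.mp h)
        have h2 : i = i - 1 + 1 := by rw [sub_add_cancel]
        simp [hM, hcapp, h1, ← h2]
      rw [Finset.prod_congr rfl hconst, Finset.prod_const, Finset.card_univ,
        Fintype.card_fin]
    have hsign : Equiv.Perm.sign c = (-1 : ℤˣ) ^ (n+1) := by
      have hcr : finRotate (n+2) * c = 1 := by
        ext x
        simp [hcapp, Equiv.Perm.mul_apply, finRotate_succ_apply, sub_add_cancel]
      have : c = (finRotate (n+2))⁻¹ := eq_inv_of_mul_eq_one_right hcr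
      rw [this, map_inv, sign_finRotate]
      simp [hmdef]
    rw [hprod1, hprodc, hsign, Equiv.Perm.sign_one]
    have hval : (((-1 : ℤˣ) ^ (n+1) : ℤˣ) : ℤ) = (-1) ^ (n+1) := by
      push_cast; ring
    simp only [Units.smul_def, hval, one_smul]
    rw [zsmul_eq_mul]
    push_cast
    rw [neg_pow t, ← mul_assoc, ← pow_add]
    have hodd : (-1:ℝ) ^ (n+1+m) = -1 := Odd.neg_one_pow ⟨n+1, by omega⟩
    rw [hodd, hmdef]
    ring
  · intro σ _ hσ
    simp only [Finset.mem_insert, Finset.mem_singleton] at hσ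
    push_neg at hσ
    suffices h0 : (∏ i : Fin m, M (σ i) i) = 0 by rw [h0]; simp
    by_contra hp
    have hfac : ∀ i, M (σ i) i ≠ 0 := fun i =>
      Finset.prod_ne_zero_iff.mp hp i (Finset.mem_univ i)
    have hcond : ∀ i, σ i = i ∨ σ i = i - 1 := by
      intro i
      by_contra hcon
      push_neg at hcon
      apply hfac i
      have h1 : ¬ (i = σ i) := fun h => hcon.1 h.symm
      have h2 : ¬ (i = σ i + 1) := by
        intro h
        exact hcon.2 (eq_sub_of_add_eq h.symm)
      simp [hM, h1, h2]
    rcases class1 σ hcond with h | h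
    · exact hσ.1 h
    · exact hσ.2 h

lemma shift_det' (m : ℕ) [NeZero m] (t : ℝ) :
    Matrix.det (Matrix.of fun j k : Fin m =>
      (if k = j then (1:ℝ) else 0) - t * (if k = j + 1 then 1 else 0))
      = 1 - t ^ m := by
  rcases m with _ | _ | n
  · exact absurd rfl (NeZero.ne 0)
  · rw [Matrix.det_fin_one]
    norm_num [Matrix.of_apply, show ((0:Fin 1) + 1 : Fin 1) = 0 from rfl]
  · exact shift_det n t


theorem stmt_9 (m : ℕ) (hm : 0 < m) (ρ : ℝ) (hρ : ρ ∈ Set.Ioo (-1 : ℝ) 1) :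
    Matrix.det (Matrix.of fun j k : Fin m =>
        ((if j = k then 1 + ρ ^ 4 else 0)
          + (if (k : ℕ) = ((j : ℕ) + 1) % m then -ρ ^ 2 else 0)
          + (if (j : ℕ) = ((k : ℕ) + 1) % m then -ρ ^ 2 else 0)) / (1 - ρ ^ 4))
      = (1 - ρ ^ 4) ^ (-(m : ℤ)) * (1 - ρ ^ (2 * m)) ^ 2 := by
  haveI : NeZero m := ⟨hm.ne'⟩
  set A : Matrix (Fin m) (Fin m) ℝ := Matrix.of fun j k =>
    (if k = j then (1:ℝ) else 0) - ρ ^ 2 * (if k = j + 1 then 1 else 0) with hA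
  have hdetA : A.det = 1 - (ρ ^ 2) ^ m := shift_det' m (ρ ^ 2)
  have hmod : ∀ a b : Fin m, ((a:ℕ) = ((b:ℕ) + 1) % m ↔ a = b + 1) := by
    intro a b
    rw [Fin.ext_iff, Fin.val_add, Fin.val_one', Nat.add_mod_mod]
  have hfact : (Matrix.of fun j k : Fin m =>
        ((if j = k then 1 + ρ ^ 4 else 0)
          + (if (k : ℕ) = ((j : ℕ) + 1) % m then -ρ ^ 2 else 0)
          + (if (j : ℕ) = ((k : ℕ) + 1) % m then -ρ ^ 2 else 0)) / (1 - ρ ^ 4))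
      = (1 - ρ ^ 4)⁻¹ • (A * Aᵀ) := by
    ext j k
    simp only [Matrix.of_apply, Matrix.smul_apply, Matrix.mul_apply,
      Matrix.transpose_apply, smul_eq_mul, hA]
    rw [div_eq_inv_mul]
    congr 1
    simp only [hmod]
    have sum1 : ∀ (a b : Fin m),
        (∑ l : Fin m, (if l = a then (1:ℝ) else 0) * (if l = b then 1 else 0))
          = if a = b then 1 else 0 := by
      intro a b
      simp only [ite_mul, one_mul, zero_mul, Finset.sum_ite_eq',
        Finset.mem_univ, if_true]
    have expand : ∀ l : Fin m,
        ((if l = j then (1:ℝ) else 0) - ρ ^ 2 * (if l = j + 1 then 1 else 0))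
          * ((if l = k then 1 else 0) - ρ ^ 2 * (if l = k + 1 then 1 else 0))
        = (if l = j then (1:ℝ) else 0) * (if l = k then 1 else 0)
          - ρ ^ 2 * ((if l = j then (1:ℝ) else 0) * (if l = k + 1 then 1 else 0))
          - ρ ^ 2 * ((if l = j + 1 then (1:ℝ) else 0) * (if l = k then 1 else 0))
          + ρ ^ 4 * ((if l = j + 1 then (1:ℝ) else 0) * (if l = k + 1 then 1 else 0)) := by
      intro l; ring
    rw [Finset.sum_congr rfl (fun l _ => expand l)]
    simp only [Finset.sum_add_distrib, Finset.sum_sub_distrib, ← Finset.mul_sum, sum1]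
    have e3 : (if j + 1 = k then (1:ℝ) else 0) = (if k = j + 1 then 1 else 0) := by
      simp [eq_comm]
    have e4 : (if j + 1 = k + 1 then (1:ℝ) else 0) = (if j = k then 1 else 0) := by
      simp only [add_left_inj]
    rw [e3, e4]
    split_ifs <;> ring
  rw [hfact, Matrix.det_smul, Matrix.det_mul, Matrix.det_transpose, hdetA,
    Fintype.card_fin, _root_.zpow_neg, zpow_natCast, ← inv_pow, ← pow_mul]
  ring
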